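/- For $\alpha > 2$ the series $\sum_{k>0} k^{2(1-\alpha)}(1+a^2k^2)^{-s(1+\alpha)} \sum_{h \neq 0, k} \frac{1}{4h^2(k-h)^2(1+a^2h^2)^{2s}}$ converges, where sums are over 2D lattice points. -/
import Mathlib

noncomputable section

def latSq (k : ℤ × ℤ) : ℝ := (k.1 : ℝ) ^ 2 + (k.2 : ℝ) ^ 2

def PosMode (k : ℤ × ℤ) : Prop := 0 < k.1 ∨ (k.1 = 0 ∧ 0 < k.2)

abbrev PosM := {k : ℤ × ℤ // PosMode k}

lemma latSq_nonneg (k : ℤ × ℤ) : 0 ≤ latSq k := by unfold latSq; positivity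

lemma one_le_sq_of_ne {m : ℤ} (hm : m ≠ 0) : (1:ℝ) ≤ (m:ℝ)^2 := by
  have h1 : (1:ℤ) ≤ |m| := Int.one_le_abs hm
  have h2 : (1:ℝ) ≤ |(m:ℝ)| := by
    rw [← Int.cast_abs]
    exact_mod_cast h1
  nlinarith [sq_abs (m:ℝ), abs_nonneg (m:ℝ)]

lemma one_le_latSq {h : ℤ × ℤ} (h0 : h ≠ 0) : 1 ≤ latSq h := by
  unfold latSq
  rcases Decidable.em (h.1 = 0) with h1 | h1
  · have h2 : h.2 ≠ 0 := fun h2 => h0 (Prod.ext h1 h2)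
    nlinarith [one_le_sq_of_ne h2, sq_nonneg ((h.1:ℝ))]
  · nlinarith [one_le_sq_of_ne h1, sq_nonneg ((h.2:ℝ))]

lemma posMode_ne_zero {k : ℤ × ℤ} (hk : PosMode k) : k ≠ 0 := by
  rcases hk with h | ⟨h1, h2⟩ <;> (intro h0; simp [Prod.ext_iff] at h0; omega)

lemma rpow_neg_two_eq {x : ℝ} (hx : 0 < x) : x ^ (-(2:ℝ)) = 1 / x ^ 2 := by
  rw [Real.rpow_neg hx.le, one_div]
  congr 1
  rw [show ((2:ℝ)) = ((2:ℕ):ℝ) by norm_num, Real.rpow_natCast]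

lemma term_nonneg (a s : ℝ) (k h : ℤ × ℤ) :
    0 ≤ 1 / (4 * latSq h * latSq (k - h) * (1 + a ^ 2 * latSq h) ^ (2 * s)) := by
  have h1 := latSq_nonneg h
  have h2 := latSq_nonneg (k - h)
  have h3 : (0:ℝ) ≤ 1 + a ^ 2 * latSq h := by nlinarith [sq_nonneg a]
  apply div_nonneg zero_le_one
  exact mul_nonneg (mul_nonneg (mul_nonneg (by norm_num) h1) h2) (Real.rpow_nonneg h3 _)

lemma summable_one_add_sq {u : ℝ} (hu : 1/2 < u) :
    Summable fun n : ℤ => ((1:ℝ) + (n:ℝ)^2) ^ (-u) := by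
  have h1 : Summable fun n : ℤ => |(n:ℝ)| ^ (-(2*u)) :=
    Real.summable_abs_int_rpow (by linarith)
  rw [← (Set.finite_singleton (0:ℤ)).summable_compl_iff]
  apply Summable.of_nonneg_of_le (f := fun n : ↥({0}ᶜ : Set ℤ) => |((n:ℤ):ℝ)| ^ (-(2*u)))
    (fun n => Real.rpow_nonneg (by positivity) _)
  · intro n
    have hn : (n:ℤ) ≠ 0 := n.2
    have h2 : (1:ℝ) ≤ ((n:ℤ):ℝ)^2 := one_le_sq_of_ne hn
    have h3 : (((n:ℤ):ℝ)^2) ^ (-u) = |((n:ℤ):ℝ)| ^ (-(2*u)) := by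
      rw [← sq_abs, ← Real.rpow_natCast |((n:ℤ):ℝ)| 2, ← Real.rpow_mul (abs_nonneg _)]
      norm_num
    calc ((1:ℝ) + ((n:ℤ):ℝ)^2) ^ (-u)
        ≤ (((n:ℤ):ℝ)^2) ^ (-u) :=
          Real.rpow_le_rpow_of_nonpos (by linarith) (by linarith) (by linarith)
      _ = _ := h3
  · exact h1.subtype _

lemma summable_lat {t : ℝ} (ht : 1 < t) :
    Summable fun h : ℤ × ℤ => ((1:ℝ) + latSq h) ^ (-t) := by
  have hf : Summable fun n : ℤ => ((1:ℝ) + (n:ℝ)^2) ^ (-(t/2)) :=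
    summable_one_add_sq (by linarith)
  have hprod : Summable fun h : ℤ × ℤ =>
      (((1:ℝ) + (h.1:ℝ)^2) ^ (-(t/2))) * (((1:ℝ) + (h.2:ℝ)^2) ^ (-(t/2))) :=
    hf.mul_of_nonneg hf (fun n => by positivity) (fun n => by positivity)
  apply Summable.of_nonneg_of_le
    (fun h => Real.rpow_nonneg (by have := latSq_nonneg h; linarith) _) _ hprod
  intro h
  set x := ((h.1:ℝ))^2 with hxdef
  set y := ((h.2:ℝ))^2 with hydef
  have hx0 : 0 ≤ x := sq_nonneg _
  have hy0 : 0 ≤ y := sq_nonneg _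
  have hB : (0:ℝ) < (1+x)*(1+y) := by positivity
  have hL : (0:ℝ) < 1+x+y := by linarith
  have hBL : (1+x)*(1+y) ≤ (1+x+y)^2 := by nlinarith
  have h1 : ((1+x)*(1+y)) ^ ((1:ℝ)/2) ≤ 1+x+y := by
    calc ((1+x)*(1+y)) ^ ((1:ℝ)/2) ≤ ((1+x+y)^(2:ℕ)) ^ ((1:ℝ)/2) :=
          Real.rpow_le_rpow hB.le hBL (by norm_num)
      _ = (1+x+y) := by
          rw [← Real.rpow_natCast (1+x+y) 2, ← Real.rpow_mul hL.le]; norm_num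
  have hlat : (1:ℝ) + latSq h = 1 + x + y := by unfold latSq; ring
  have h2 : ((1:ℝ) + latSq h) ^ (-t) ≤ (((1+x)*(1+y)) ^ ((1:ℝ)/2)) ^ (-t) := by
    rw [hlat]
    exact Real.rpow_le_rpow_of_nonpos (by positivity) h1 (by linarith)
  have h3 : (((1+x)*(1+y)) ^ ((1:ℝ)/2)) ^ (-t) = ((1+x)*(1+y)) ^ (-(t/2)) := by
    rw [← Real.rpow_mul hB.le]; congr 1; ring
  have h4 : ((1+x)*(1+y)) ^ (-(t/2)) =
      (((1:ℝ)+x) ^ (-(t/2))) * (((1:ℝ)+y) ^ (-(t/2))) :=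
    Real.mul_rpow (by linarith) (by linarith)
  calc ((1:ℝ) + latSq h) ^ (-t) ≤ _ := h2
    _ = _ := h3.trans h4

lemma summable_lat_sub {t : ℝ} (ht : 1 < t) (k : ℤ × ℤ) :
    Summable fun h : ℤ × ℤ => ((1:ℝ) + latSq (k - h)) ^ (-t) :=
  ((Equiv.subLeft k).summable_iff
    (f := fun h : ℤ × ℤ => ((1:ℝ) + latSq h) ^ (-t))).2 (summable_lat ht)

lemma tsum_lat_sub (t : ℝ) (k : ℤ × ℤ) :
    (∑' h : ℤ × ℤ, ((1:ℝ) + latSq (k - h)) ^ (-t)) =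
      ∑' h : ℤ × ℤ, ((1:ℝ) + latSq h) ^ (-t) :=
  (Equiv.subLeft k).tsum_eq (fun h : ℤ × ℤ => ((1:ℝ) + latSq h) ^ (-t))

/-- For `α > 2`, the double series
`∑_{k>0} k^{2(1-α)}(1+a²k²)^{-s(1+α)} ∑_{h ≠ 0,k} 1/(4h²(k-h)²(1+a²h²)^{2s})`
converges: the inner series converges for each `k>0` and the resulting outer series
converges. -/
theorem avgEuler_vectorField_series_summable (a s α : ℝ) (ha : a ≠ 0) (hs : 0 < s)
    (hα : 2 < α) :
    (∀ k : PosM, Summable (fun h : {h : ℤ × ℤ // h ≠ 0 ∧ h ≠ (k : ℤ × ℤ)} =>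
      1 / (4 * latSq h * latSq ((k : ℤ × ℤ) - h) * (1 + a ^ 2 * latSq h) ^ (2 * s)))) ∧
    Summable (fun k : PosM =>
      latSq k ^ (1 - α) * (1 + a ^ 2 * latSq k) ^ (-(s * (1 + α))) *
        ∑' h : {h : ℤ × ℤ // h ≠ 0 ∧ h ≠ (k : ℤ × ℤ)},
          1 / (4 * latSq h * latSq ((k : ℤ × ℤ) - h) * (1 + a ^ 2 * latSq h) ^ (2 * s))) := by
  set F : ℤ × ℤ → ℝ := fun h => ((1:ℝ) + latSq h) ^ (-(2:ℝ)) with hFdef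
  have hFsum : Summable F := summable_lat (by norm_num)
  have hFnonneg : ∀ h, 0 ≤ F h := fun h => Real.rpow_nonneg (by have := latSq_nonneg h; linarith) _
  set S : ℝ := ∑' h : ℤ × ℤ, F h with hSdef
  have hSnonneg : 0 ≤ S := tsum_nonneg hFnonneg
  -- pointwise bound for the inner terms by a translation-invariant summable weight
  have key : ∀ (k : ℤ × ℤ) (h : ℤ × ℤ), h ≠ 0 → h ≠ k →
      1 / (4 * latSq h * latSq (k - h) * (1 + a ^ 2 * latSq h) ^ (2 * s)) ≤
        (1/2) * (F h + F (k - h)) := by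
    intro k h h0 hk
    have hA : 1 ≤ latSq h := one_le_latSq h0
    have hB : 1 ≤ latSq (k - h) := one_le_latSq (by
      intro hkh
      exact hk (sub_eq_zero.mp hkh).symm)
    set A := latSq h
    set B := latSq (k - h)
    have hC : 1 ≤ (1 + a ^ 2 * A) ^ (2 * s) := by
      have hbase : (1:ℝ) ≤ 1 + a ^ 2 * A := by nlinarith [sq_nonneg a]
      calc (1:ℝ) = 1 ^ (2*s) := (Real.one_rpow _).symm
        _ ≤ _ := Real.rpow_le_rpow (by norm_num) hbase (by linarith)
    set C := (1 + a ^ 2 * A) ^ (2 * s)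
    have hP : (0:ℝ) < 1 + A := by linarith
    have hQ : (0:ℝ) < 1 + B := by linarith
    have step1 : 1 / (4 * A * B * C) ≤ 1 / ((1+A)*(1+B)) := by
      apply one_div_le_one_div_of_le (by positivity)
      nlinarith [mul_le_mul_of_nonneg_left hC (show (0:ℝ) ≤ 4*A*B by nlinarith)]
    have step2 : 1 / ((1+A)*(1+B)) ≤ (1/2) * (1/(1+A)^2 + 1/(1+B)^2) := by
      have expand : (1/2) * (1/(1+A)^2 + 1/(1+B)^2) - 1/((1+A)*(1+B)) =
          (1/2) * (1/(1+A) - 1/(1+B))^2 := by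
        field_simp
        ring
      nlinarith [sq_nonneg (1/(1+A) - 1/(1+B))]
    have hFA : F h = 1/(1+A)^2 := rpow_neg_two_eq hP
    have hFB : F (k - h) = 1/(1+B)^2 := rpow_neg_two_eq hQ
    rw [hFA, hFB]
    exact step1.trans step2
  -- summability of the dominating function restricted to the inner index set
  have hg : ∀ k : ℤ × ℤ, Summable fun h : ℤ × ℤ => (1/2) * (F h + F (k - h)) :=
    fun k => ((hFsum.add (summable_lat_sub (by norm_num) k)).mul_left (1/2))
  have inner_summable : ∀ k : PosM, Summable (fun h : {h : ℤ × ℤ // h ≠ 0 ∧ h ≠ (k : ℤ × ℤ)} =>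
      1 / (4 * latSq h * latSq ((k : ℤ × ℤ) - h) * (1 + a ^ 2 * latSq h) ^ (2 * s))) := by
    intro k
    have hgsub : Summable fun h : {h : ℤ × ℤ // h ≠ 0 ∧ h ≠ (k : ℤ × ℤ)} =>
        (1/2) * (F h + F ((k : ℤ × ℤ) - h)) :=
      ((hg k).subtype {h | h ≠ 0 ∧ h ≠ (k : ℤ × ℤ)}).congr (fun _ => rfl)
    exact Summable.of_nonneg_of_le (fun h => term_nonneg a s _ _)
      (fun h => key k h h.2.1 h.2.2) hgsub
  refine ⟨inner_summable, ?_⟩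
  -- uniform bound for the inner sums
  have inner_le : ∀ k : PosM,
      (∑' h : {h : ℤ × ℤ // h ≠ 0 ∧ h ≠ (k : ℤ × ℤ)},
        1 / (4 * latSq h * latSq ((k : ℤ × ℤ) - h) * (1 + a ^ 2 * latSq h) ^ (2 * s))) ≤ S := by
    intro k
    have hgsub : Summable fun h : {h : ℤ × ℤ // h ≠ 0 ∧ h ≠ (k : ℤ × ℤ)} =>
        (1/2) * (F h + F ((k : ℤ × ℤ) - h)) :=
      ((hg k).subtype {h | h ≠ 0 ∧ h ≠ (k : ℤ × ℤ)}).congr (fun _ => rfl)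
    have h1 : (∑' h : {h : ℤ × ℤ // h ≠ 0 ∧ h ≠ (k : ℤ × ℤ)},
        1 / (4 * latSq h * latSq ((k : ℤ × ℤ) - h) * (1 + a ^ 2 * latSq h) ^ (2 * s))) ≤
        ∑' h : {h : ℤ × ℤ // h ≠ 0 ∧ h ≠ (k : ℤ × ℤ)}, (1/2) * (F h + F ((k : ℤ × ℤ) - h)) :=
      Summable.tsum_le_tsum (fun h => key k h h.2.1 h.2.2) (inner_summable k) hgsub
    have h2 : (∑' h : {h : ℤ × ℤ // h ≠ 0 ∧ h ≠ (k : ℤ × ℤ)},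
        (1/2) * (F h + F ((k : ℤ × ℤ) - h))) ≤
        ∑' h : ℤ × ℤ, (1/2) * (F h + F ((k : ℤ × ℤ) - h)) :=
      Summable.tsum_subtype_le (fun h : ℤ × ℤ => (1/2) * (F h + F ((k : ℤ × ℤ) - h)))
        {h | h ≠ 0 ∧ h ≠ (k : ℤ × ℤ)}
        (fun h => by
          have := hFnonneg h
          have := hFnonneg ((k : ℤ × ℤ) - h)
          linarith) (hg k)
    have h3 : (∑' h : ℤ × ℤ, (1/2) * (F h + F ((k : ℤ × ℤ) - h))) = S := by
      rw [tsum_mul_left, Summable.tsum_add hFsum (summable_lat_sub (by norm_num) _)]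
      rw [tsum_lat_sub 2 (k : ℤ × ℤ)]
      rw [← hSdef]
      ring
    linarith [h1.trans (h2.trans_eq h3)]
  -- outer comparison
  have domin : Summable (fun k : PosM => (2:ℝ) ^ (α - 1) * S * ((1 + latSq (k : ℤ × ℤ)) ^ (-(α - 1)))) := by
    have := ((summable_lat (t := α - 1) (by linarith)).mul_left ((2:ℝ) ^ (α - 1) * S)).subtype
      {k | PosMode k}
    exact this.congr (fun _ => rfl)
  apply Summable.of_nonneg_of_le _ _ domin
  · intro k
    have h1 : (0:ℝ) ≤ latSq (k : ℤ × ℤ) ^ (1 - α) := Real.rpow_nonneg (latSq_nonneg _) _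
    have h2 : (0:ℝ) ≤ (1 + a ^ 2 * latSq (k : ℤ × ℤ)) ^ (-(s * (1 + α))) :=
      Real.rpow_nonneg (by nlinarith [sq_nonneg a, latSq_nonneg (k : ℤ × ℤ)]) _
    have h3 : (0:ℝ) ≤ ∑' h : {h : ℤ × ℤ // h ≠ 0 ∧ h ≠ (k : ℤ × ℤ)},
        1 / (4 * latSq h * latSq ((k : ℤ × ℤ) - h) * (1 + a ^ 2 * latSq h) ^ (2 * s)) :=
      tsum_nonneg (fun h => term_nonneg a s _ _)
    exact mul_nonneg (mul_nonneg h1 h2) h3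
  · intro k
    set A := latSq (k : ℤ × ℤ) with hAdef
    have hA1 : 1 ≤ A := one_le_latSq (posMode_ne_zero k.2)
    have hM : (1 + a ^ 2 * A) ^ (-(s * (1 + α))) ≤ 1 :=
      Real.rpow_le_one_of_one_le_of_nonpos (by nlinarith [sq_nonneg a]) (by nlinarith)
    have hM0 : (0:ℝ) ≤ (1 + a ^ 2 * A) ^ (-(s * (1 + α))) :=
      Real.rpow_nonneg (by nlinarith [sq_nonneg a]) _
    have hI0 : (0:ℝ) ≤ ∑' h : {h : ℤ × ℤ // h ≠ 0 ∧ h ≠ (k : ℤ × ℤ)},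
        1 / (4 * latSq h * latSq ((k : ℤ × ℤ) - h) * (1 + a ^ 2 * latSq h) ^ (2 * s)) :=
      tsum_nonneg (fun h => term_nonneg a s _ _)
    have hpow0 : (0:ℝ) ≤ A ^ (1 - α) := Real.rpow_nonneg (by linarith) _
    have hpow : A ^ (1 - α) ≤ (2:ℝ) ^ (α - 1) * ((1 + A) ^ (-(α - 1))) := by
      have e1 : A ^ (1 - α) = A ^ (-(α - 1)) := by ring_nf
      have e2 : A ^ (-(α - 1)) ≤ ((1 + A)/2) ^ (-(α - 1)) :=
        Real.rpow_le_rpow_of_nonpos (by linarith) (by linarith) (by linarith)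
      have e3 : ((1 + A)/2) ^ (-(α - 1)) = (1 + A) ^ (-(α - 1)) / (2:ℝ) ^ (-(α - 1)) :=
        Real.div_rpow (by linarith) (by norm_num : (0:ℝ) ≤ 2) (-(α - 1))
      have e4 : (1 + A) ^ (-(α - 1)) / (2:ℝ) ^ (-(α - 1)) =
          (2:ℝ) ^ (α - 1) * ((1 + A) ^ (-(α - 1))) := by
        rw [Real.rpow_neg (by norm_num : (0:ℝ) ≤ 2), division_def, inv_inv]
        ring
      rw [e1]
      exact e2.trans_eq (e3.trans e4)
    calc A ^ (1 - α) * (1 + a ^ 2 * A) ^ (-(s * (1 + α))) *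
          (∑' h : {h : ℤ × ℤ // h ≠ 0 ∧ h ≠ (k : ℤ × ℤ)},
            1 / (4 * latSq h * latSq ((k : ℤ × ℤ) - h) * (1 + a ^ 2 * latSq h) ^ (2 * s)))
        ≤ A ^ (1 - α) * 1 * S := by
          apply mul_le_mul (by
            apply mul_le_mul le_rfl hM hM0 hpow0) (inner_le k) hI0
          nlinarith [hpow0]
      _ = A ^ (1 - α) * S := by ring
      _ ≤ ((2:ℝ) ^ (α - 1) * ((1 + A) ^ (-(α - 1)))) * S :=
          mul_le_mul_of_nonneg_right hpow hSnonneg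
      _ = (2:ℝ) ^ (α - 1) * S * ((1 + A) ^ (-(α - 1))) := by ring
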